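/- Fix k ≥ 2, n ≥ 1, and let B be the permutation automaton on {1,…,k} × Z_{n+1} defined above (a, b acting on the first coordinate as (1 2 … k) and (1 2), c cycling the second coordinate, initial state (k,0), final states (k,i) for i ≠ n). For each word w over {a,b,c}, let ρ_w ∈ S_k be the permutation induced by w on the first coordinate. Then { ρ_w | w ∈ L(B) } = Stab_{S_k}(k). -/

import Mathlib

def qPerm (k : ℕ) (hk : 2 ≤ k) : Fin 3 → Equiv.Perm (Fin k) :=
  fun x =>
    if x = 0 then finRotate k
    else if x = 1 then Equiv.swap (⟨0, by omega⟩ : Fin k) ⟨1, by omega⟩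
    else 1

def bDelta (k n : ℕ) (hk : 2 ≤ k) :
    Fin k × ZMod (n + 1) → Fin 3 → Fin k × ZMod (n + 1) :=
  fun p x =>
    if x = 0 then (finRotate k p.1, p.2)
    else if x = 1 then (Equiv.swap (⟨0, by omega⟩ : Fin k) ⟨1, by omega⟩ p.1, p.2)
    else (p.1, p.2 + 1)

def finB (k n : ℕ) : Set (Fin k × ZMod (n + 1)) :=
  {p | p.1.val = k - 1 ∧ p.2 ≠ (n : ZMod (n + 1))}

lemma fold_pair (k n : ℕ) (hk : 2 ≤ k) :
    ∀ (w : List (Fin 3)) (q : Fin k) (z : ZMod (n + 1)),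
      w.foldl (bDelta k n hk) (q, z) =
        (w.foldl (fun p x => qPerm k hk x p) q, z + (w.count 2 : ℕ)) := by
  intro w
  induction w with
  | nil => intro q z; simp
  | cons x w ih =>
    intro q z
    fin_cases x <;>
      simp [bDelta, qPerm, ih, List.count_cons] <;> push_cast <;> ring

lemma fold_perm (k : ℕ) (hk : 2 ≤ k) :
    ∀ (u : List (Fin 3)) (q : Fin k),
      u.foldl (fun p x => qPerm k hk x p) q = ((u.map (qPerm k hk)).reverse.prod) q := by
  intro u
  induction u with
  | nil => intro q; simp
  | cons x u ih =>
    intro q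
    simp [ih, List.prod_append]

lemma closure_ab (k : ℕ) (hk : 2 ≤ k) :
    Submonoid.closure
      ({finRotate k, Equiv.swap (⟨0, by omega⟩ : Fin k) ⟨1, by omega⟩} :
        Set (Equiv.Perm (Fin k))) = ⊤ := by
  obtain ⟨m, rfl⟩ : ∃ m, k = m + 2 := ⟨k - 2, by omega⟩
  set S : Set (Equiv.Perm (Fin (m + 2))) :=
    {finRotate (m + 2), Equiv.swap (⟨0, by omega⟩ : Fin (m + 2)) ⟨1, by omega⟩} with hS
  have hsub : Subgroup.closure S = ⊤ := by
    have h1 : (finRotate (m + 2)).IsCycle := isCycle_finRotate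
    have h2 : (finRotate (m + 2)).support = Finset.univ := support_finRotate
    have := Equiv.Perm.closure_cycle_adjacent_swap h1 h2 (⟨0, by omega⟩ : Fin (m + 2))
    convert this using 2
    congr 1
  have hinv : S⁻¹ ⊆ (Submonoid.closure S : Set (Equiv.Perm (Fin (m + 2)))) := by
    intro y hy
    rw [Set.mem_inv] at hy
    have hy' : y⁻¹ ∈ Submonoid.closure S := Submonoid.subset_closure (by simpa using hy)
    have h0 : 0 < orderOf y⁻¹ := orderOf_pos _
    have h1 := pow_orderOf_eq_one (y⁻¹)
    rw [← Nat.succ_pred_eq_of_pos h0, pow_succ] at h1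
    have : (y⁻¹) ^ (orderOf y⁻¹ - 1) = y := mul_inv_eq_one.mp h1
    rw [← this]
    exact pow_mem hy' _
  have : (Subgroup.closure S).toSubmonoid ≤ Submonoid.closure S := by
    rw [Subgroup.closure_toSubmonoid]
    exact Submonoid.closure_le.2 (Set.union_subset Submonoid.subset_closure hinv)
  rw [eq_top_iff]
  intro σ _
  exact this (by rw [hsub]; trivial)

/-- The permutations of the first coordinate induced by words accepted by B
are exactly the stabilizer of the point k in S_k. -/
theorem stmt_14 (k n : ℕ) (hk : 2 ≤ k) (hn : 1 ≤ n)
    (ρ : List (Fin 3) → Equiv.Perm (Fin k))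
    (hρ : ∀ (w : List (Fin 3)) (q : Fin k),
      ρ w q = w.foldl (fun p x => qPerm k hk x p) q) :
    {σ : Equiv.Perm (Fin k) | ∃ w : List (Fin 3),
        w.foldl (bDelta k n hk) (⟨k - 1, by omega⟩, 0) ∈ finB k n ∧ ρ w = σ} =
      {σ : Equiv.Perm (Fin k) | σ ⟨k - 1, by omega⟩ = ⟨k - 1, by omega⟩} := by
  set a := finRotate k
  set b := Equiv.swap (⟨0, by omega⟩ : Fin k) ⟨1, by omega⟩
  ext σ
  simp only [Set.mem_setOf_eq]
  constructor
  · rintro ⟨w, hacc, rfl⟩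
    rw [fold_pair] at hacc
    obtain ⟨h1, -⟩ := hacc
    have := hρ w ⟨k - 1, by omega⟩
    rw [this]
    exact Fin.ext h1
  · intro hσ
    have hmem : σ ∈ Submonoid.closure ({a, b} : Set (Equiv.Perm (Fin k))) := by
      rw [closure_ab k hk]; trivial
    obtain ⟨l, hl, hprod⟩ := Submonoid.exists_list_of_mem_closure hmem
    simp only [Set.mem_insert_iff, Set.mem_singleton_iff] at hl
    have hmap : ((l.map (fun y => if y = a then (0 : Fin 3) else 1)).reverse.map
        (qPerm k hk)).reverse = l := by
      rw [List.map_reverse, List.reverse_reverse, List.map_map]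
      conv_rhs => rw [show l = l.map id by simp]
      apply List.map_congr_left
      intro y hy
      rcases hl y hy with h | h <;> simp only [Function.comp, id]
      · simp [h, qPerm]; rfl
      · by_cases hya : y = a
        · simp [hya, qPerm]; rfl
        · subst h; simp [hya, qPerm]; rfl
    refine ⟨(l.map (fun y => if y = a then (0 : Fin 3) else 1)).reverse, ?_, ?_⟩
    · rw [fold_pair]
      constructor
      · simp only [fold_perm k hk, hmap, hprod]
        rw [hσ]
      · have hcount : ((l.map (fun y => if y = a then (0 : Fin 3) else 1)).reverse).count 2 = 0 := by
          rw [List.count_eq_zero]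
          intro h
          simp only [List.mem_reverse, List.mem_map] at h
          obtain ⟨y, -, hy⟩ := h
          split at hy <;> simp_all
        rw [hcount]
        simp only [Nat.cast_zero, zero_add]
        intro h
        have hz : (n : ZMod (n + 1)) = 0 := h.symm
        rw [ZMod.natCast_eq_zero_iff] at hz
        exact absurd (Nat.le_of_dvd (by omega) hz) (by omega)
    · ext q
      rw [hρ, fold_perm, hmap, hprod]
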